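/- arXiv:math/0208223 — 3 statements merged into one kernel-verified Lean document; each statement's English description precedes it below -/
import Mathlib

section
/- Let g : ℝⁿ → ℝ be a C² convex symmetric function, λ : ℝ → ℝⁿ a C² curve with pairwise distinct coordinates λ₁(0),...,λₙ(0) at t = 0, and suppose the second derivatives satisfy λ̈ᵢ(0) = -Σ_{j≠i} Qᵢⱼ²/(λⱼ(0) - λᵢ(0)) for some real symmetric matrix Q. Then d²/dt² [g(λ(t))] at t = 0 is ≥ 0. -/
open Finset


/-- Supporting line inequality for a convex differentiable function. -/
lemma supp_line {E : Type*} [NormedAddCommGroup E] [NormedSpace ℝ E]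
    {g : E → ℝ} (hconv : ConvexOn ℝ Set.univ g) {x : E} {D : E →L[ℝ] ℝ}
    (hD : HasFDerivAt g D x) (y : E) : g x + D (y - x) ≤ g y := by
  rcases eq_or_ne y x with rfl | hne
  · simp
  set φ : ℝ → ℝ := fun s => g (x + s • (y - x)) with hφdef
  have hφconv : ConvexOn ℝ Set.univ φ := by
    have h1 := hconv.comp_affineMap (AffineMap.lineMap x y : ℝ →ᵃ[ℝ] E)
    have heq : φ = g ∘ (AffineMap.lineMap x y : ℝ →ᵃ[ℝ] E) := by
      funext s
      simp only [hφdef, Function.comp_apply, AffineMap.lineMap_apply, vsub_eq_sub, vadd_eq_add]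
      rw [add_comm]
    rw [heq]
    simpa using h1
  have hline : HasDerivAt (fun s : ℝ => x + s • (y - x)) (y - x) 0 := by
    simpa using ((hasDerivAt_id (0:ℝ)).smul_const (y - x)).const_add x
  have hd : HasDerivAt φ (D (y - x)) 0 := by
    have hD'' : HasFDerivAt g D (x + (0:ℝ) • (y - x)) := by
      convert hD using 2
      simp
    have := hD''.comp_hasDerivAt (0:ℝ) hline
    simpa [hφdef, Function.comp_def] using this
  have hs := hφconv.le_slope_of_hasDerivAt (Set.mem_univ (0:ℝ)) (Set.mem_univ (1:ℝ)) one_pos hd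
  have h1 : φ 1 = g y := by simp [hφdef]
  have h0 : φ 0 = g x := by simp [hφdef]
  rw [slope_def_field] at hs
  rw [h1, h0] at hs
  have : D (y - x) ≤ g y - g x := by
    simpa using hs
  linarith

/-- If `h` is `C²`, nonnegative, and vanishes at `0`, then `h''(0) ≥ 0`. -/
lemma aux_min {h : ℝ → ℝ} (hC : ContDiff ℝ 2 h) (hnn : ∀ t, 0 ≤ h t) (h0 : h 0 = 0) :
    0 ≤ deriv (deriv h) 0 := by
  by_contra hneg
  push_neg at hneg
  have hC' : ContDiff ℝ 1 (deriv h) := by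
    have h2 : ContDiff ℝ ((1:ℕ) + 1) h := by exact_mod_cast hC
    exact (contDiff_succ_iff_deriv.mp h2).2.2
  have hcont2 : Continuous (deriv (deriv h)) := hC'.continuous_deriv le_rfl
  obtain ⟨δ, hδ, hball⟩ := Metric.isOpen_iff.mp (isOpen_lt hcont2 continuous_const) 0
    (by simpa using hneg)
  have hd0 : deriv h 0 = 0 := by
    have hm : IsLocalMin h 0 := Filter.Eventually.of_forall fun t => by rw [h0]; exact hnn t
    exact hm.deriv_eq_zero
  set ε := δ/2 with hε'
  have hε : 0 < ε := by positivity
  have hsub : Set.Icc (0:ℝ) ε ⊆ Metric.ball 0 δ := by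
    intro t ht
    rw [Metric.mem_ball, Real.dist_eq, sub_zero, abs_of_nonneg ht.1]
    have := ht.2
    simp only [hε'] at this ⊢
    linarith
  have hanti : StrictAntiOn (deriv h) (Set.Icc 0 ε) := by
    apply strictAntiOn_of_deriv_neg (convex_Icc _ _) hC'.continuous.continuousOn
    intro t ht
    rw [interior_Icc] at ht
    exact hball (hsub ⟨ht.1.le, ht.2.le⟩)
  have hanti2 : StrictAntiOn h (Set.Icc 0 ε) := by
    apply strictAntiOn_of_deriv_neg (convex_Icc _ _) hC.continuous.continuousOn
    intro t ht
    rw [interior_Icc] at ht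
    have := hanti (Set.left_mem_Icc.mpr hε.le) ⟨ht.1.le, ht.2.le⟩ ht.1
    rw [hd0] at this
    exact this
  have := hanti2 (Set.left_mem_Icc.mpr hε.le) (Set.right_mem_Icc.mpr hε.le) hε
  rw [h0] at this
  exact absurd (hnn ε) (not_le.mpr this)

theorem stmt14 (n : ℕ) (g : (Fin n → ℝ) → ℝ)
    (hC2 : ContDiff ℝ 2 g)
    (hconv : ConvexOn ℝ Set.univ g)
    (hsymm : ∀ (σ : Equiv.Perm (Fin n)) (x : Fin n → ℝ), g (x ∘ σ) = g x)
    (l : ℝ → Fin n → ℝ)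
    (hlC2 : ∀ i, ContDiff ℝ 2 (fun t => l t i))
    (hdistinct : Function.Injective (l 0))
    (Q : Matrix (Fin n) (Fin n) ℝ) (hQ : Q.IsSymm)
    (hsecond : ∀ i, deriv (deriv (fun t => l t i)) 0 =
      -∑ j ∈ univ \ {i}, Q i j ^ 2 / (l 0 j - l 0 i)) :
    0 ≤ deriv (deriv (fun t => g (l t))) 0 := by
  set x : Fin n → ℝ := l 0 with hxdef
  have hgdiff : Differentiable ℝ g := hC2.differentiable two_ne_zero
  set A : (Fin n → ℝ) →L[ℝ] ℝ := fderiv ℝ g x with hAdef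
  have hAx : HasFDerivAt g A x := (hgdiff x).hasFDerivAt
  set c : Fin n → ℝ := fun i => A (Pi.single i 1) with hcdef
  set a : Fin n → ℝ := fun i => deriv (deriv (fun t => l t i)) 0 with hadef
  -- smoothness of the curve
  have hlC2' : ContDiff ℝ 2 l := contDiff_pi.mpr hlC2
  have hfC2 : ContDiff ℝ 2 (fun t => g (l t)) := hC2.comp hlC2'
  have hld : ∀ i, Differentiable ℝ (fun t => l t i) := fun i =>
    (hlC2 i).differentiable two_ne_zero
  have hld2 : ∀ i, ContDiff ℝ 1 (deriv (fun t => l t i)) := by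
    intro i
    have h2 : ContDiff ℝ ((1:ℕ) + 1) (fun t => l t i) := by exact_mod_cast hlC2 i
    exact (contDiff_succ_iff_deriv.mp h2).2.2
  -- the affine minorant m
  set m : ℝ → ℝ := fun t => g x + A (l t - x) with hmdef
  have hLd : ∀ t, HasDerivAt l (fun i => deriv (fun s => l s i) t) t := fun t =>
    hasDerivAt_pi.mpr fun i => ((hld i) t).hasDerivAt
  have hm' : ∀ t, HasDerivAt m (A (fun i => deriv (fun s => l s i) t)) t := by
    intro t
    have h1 : HasDerivAt (fun t => A (l t)) (A (fun i => deriv (fun s => l s i) t)) t :=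
      A.hasFDerivAt.comp_hasDerivAt t (hLd t)
    have h2 := h1.const_add (g x - A x)
    have heq : m = fun s => g x - A x + A (l s) := by
      funext s
      simp [hmdef, map_sub]
      ring
    rw [heq]
    exact h2
  have hmderiv : deriv m = fun t => A (fun i => deriv (fun s => l s i) t) := by
    funext t
    exact (hm' t).deriv
  have hm'' : HasDerivAt (deriv m) (A a) 0 := by
    rw [hmderiv]
    exact A.hasFDerivAt.comp_hasDerivAt 0
      (hasDerivAt_pi.mpr fun i => ((hld2 i).differentiable one_ne_zero 0).hasDerivAt)
  -- h := f - m is nonnegative, vanishes at 0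
  set h : ℝ → ℝ := fun t => g (l t) - m t with hhdef
  have hmC2 : ContDiff ℝ 2 m :=
    contDiff_const.add (A.contDiff.comp (hlC2'.sub contDiff_const))
  have hhC2 : ContDiff ℝ 2 h := hfC2.sub hmC2
  have hhnn : ∀ t, 0 ≤ h t := by
    intro t
    have := supp_line hconv hAx (l t)
    simp only [hhdef, hmdef]
    linarith
  have hh0 : h 0 = 0 := by
    simp [hhdef, hmdef, ← hxdef]
  have hh2 := aux_min hhC2 hhnn hh0
  -- split the second derivative
  have hfd : Differentiable ℝ (fun t => g (l t)) := hfC2.differentiable two_ne_zero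
  have hmd : Differentiable ℝ m := fun t => (hm' t).differentiableAt
  have hfd2 : DifferentiableAt ℝ (deriv (fun t => g (l t))) 0 := by
    have h2 : ContDiff ℝ ((1:ℕ) + 1) (fun t => g (l t)) := by exact_mod_cast hfC2
    exact ((contDiff_succ_iff_deriv.mp h2).2.2.differentiable one_ne_zero) 0
  have hmd2 : DifferentiableAt ℝ (deriv m) 0 := hm''.differentiableAt
  have hderivh : deriv h = fun t => deriv (fun t => g (l t)) t - deriv m t := by
    funext t
    exact deriv_sub (hfd t) (hmd t)
  have hsplit : deriv (deriv h) 0 = deriv (deriv (fun t => g (l t))) 0 - A a := by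
    rw [hderivh, deriv_fun_sub hfd2 hmd2, hm''.deriv]
  -- key Schur-type inequality
  have key : ∀ i j, i ≠ j → 0 ≤ (c i - c j) * (x i - x j) := by
    intro i j hij
    set σ := Equiv.swap i j with hσ
    have h1 := supp_line hconv hAx (x ∘ σ)
    rw [hsymm σ x] at h1
    have hyx : (x ∘ σ) - x = (x j - x i) • (Pi.single i (1:ℝ) - Pi.single j 1) := by
      funext k
      rcases eq_or_ne k i with rfl | hki
      · simp [hσ, Equiv.swap_apply_left, Pi.single_eq_same, Pi.single_eq_of_ne hij]
      rcases eq_or_ne k j with rfl | hkj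
      · simp [hσ, Equiv.swap_apply_right, Pi.single_eq_same, Pi.single_eq_of_ne hij.symm]
      · simp [hσ, Equiv.swap_apply_of_ne_of_ne hki hkj, Pi.single_eq_of_ne hki,
          Pi.single_eq_of_ne hkj]
    have hAu : A (Pi.single i (1:ℝ) - Pi.single j 1) = c i - c j := by
      rw [map_sub]
    have e1 : A ((x ∘ σ) - x) = (x j - x i) * (c i - c j) := by
      rw [hyx, map_smul, hAu, smul_eq_mul]
    nlinarith [h1, e1]
  -- A a = ∑ a i * c i
  have hAa : A a = ∑ i, a i * c i := by
    conv_lhs => rw [← Finset.univ_sum_single a]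
    rw [map_sum]
    refine Finset.sum_congr rfl fun i _ => ?_
    have hsing : Pi.single i (a i) = a i • (Pi.single i 1 : Fin n → ℝ) := by
      funext k
      rcases eq_or_ne k i with rfl | hk
      · simp
      · simp [Pi.single_eq_of_ne hk]
    rw [hsing, map_smul, smul_eq_mul]
  -- the double sum is nonnegative
  set G : Fin n → Fin n → ℝ :=
    fun i j => if j = i then 0 else -(c i * (Q i j ^ 2 / (x j - x i))) with hGdef
  have hsum : ∀ i, a i * c i = ∑ j, G i j := by
    intro i
    have h1 : a i = -∑ j ∈ univ \ {i}, Q i j ^ 2 / (x j - x i) := hsecond i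
    have h2 : ∑ j ∈ univ \ {i}, G i j = ∑ j, G i j := by
      apply Finset.sum_subset (Finset.sdiff_subset)
      intro j _ hj
      have : j = i := by simpa using hj
      simp [hGdef, this]
    rw [← h2, h1]
    rw [neg_mul, Finset.sum_mul, ← Finset.sum_neg_distrib]
    refine Finset.sum_congr rfl fun j hj => ?_
    have hji : j ≠ i := by
      simp only [Finset.mem_sdiff, Finset.mem_singleton] at hj
      exact hj.2
    simp [hGdef, hji]
    ring
  have hGnn : ∀ i j, 0 ≤ G i j + G j i := by
    intro i j
    rcases eq_or_ne j i with rfl | hji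
    · simp [hGdef]
    have hxij : x i ≠ x j := fun he => hji.symm (hdistinct he)
    have hQij : Q j i = Q i j := hQ.apply i j
    have hterm : G i j + G j i =
        Q i j ^ 2 * (((c i - c j) * (x i - x j)) / (x i - x j) ^ 2) := by
      simp only [hGdef, if_neg hji, if_neg (Ne.symm hji), hQij]
      have hd : x i - x j ≠ 0 := sub_ne_zero.mpr hxij
      have hd2 : x j - x i ≠ 0 := sub_ne_zero.mpr (Ne.symm hxij)
      field_simp
      ring
    rw [hterm]
    exact mul_nonneg (sq_nonneg _)
      (div_nonneg (key i j (Ne.symm hji)) (sq_nonneg _))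
  have hT : 0 ≤ ∑ i, a i * c i := by
    have hTT : (∑ i, a i * c i) + (∑ i, a i * c i) = ∑ i, ∑ j, (G i j + G j i) := by
      have e1 : (∑ i, a i * c i) = ∑ i, ∑ j, G i j := Finset.sum_congr rfl fun i _ => hsum i
      have e2 : (∑ i : Fin n, ∑ j, G i j) = ∑ i, ∑ j, G j i := Finset.sum_comm
      rw [e1]
      nth_rewrite 2 [e2]
      rw [← Finset.sum_add_distrib]
      refine Finset.sum_congr rfl fun i _ => ?_
      rw [← Finset.sum_add_distrib]
    have : 0 ≤ ∑ i : Fin n, ∑ j, (G i j + G j i) :=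
      Finset.sum_nonneg fun i _ => Finset.sum_nonneg fun j _ => hGnn i j
    linarith
  rw [← hAa] at hT
  linarith [hsplit, hh2, hT]
end

section
/- (Davis's theorem, smooth case) Let g : ℝⁿ → ℝ be a C², convex, symmetric function, and define f on n×n real symmetric matrices by f(M) = g(λ₁(M),...,λₙ(M)) where λᵢ(M) are the eigenvalues of M (in any order). Then f is convex on the space of symmetric matrices. -/
open Matrix Finset

section aux

variable {n : ℕ}

lemma isHermitian_smul_real {A : Matrix (Fin n) (Fin n) ℝ} (hA : A.IsHermitian) (a : ℝ) :
    (a • A).IsHermitian := by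
  unfold Matrix.IsHermitian at *
  rw [Matrix.conjTranspose_smul, hA, star_trivial]

lemma permMatrix_mulVec (σ : Equiv.Perm (Fin n)) (x : Fin n → ℝ) :
    σ.permMatrix ℝ *ᵥ x = x ∘ σ := by
  funext i
  simp [mulVec, dotProduct, Equiv.Perm.permMatrix, PEquiv.toMatrix_apply,
    Equiv.toPEquiv_apply]

/-- Schur–Horn type inequality: for a symmetric convex `g`, the value of `g` on the diagonal
of `Uᴴ A U` (for unitary `U`) is at most `g` of the eigenvalues of `A`. -/
lemma diag_le_eigenvalues (g : (Fin n → ℝ) → ℝ)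
    (hconv : ConvexOn ℝ Set.univ g)
    (hsymm : ∀ (σ : Equiv.Perm (Fin n)) (x : Fin n → ℝ), g (x ∘ σ) = g x)
    (A : Matrix (Fin n) (Fin n) ℝ) (hA : A.IsHermitian)
    (U : Matrix.unitaryGroup (Fin n) ℝ) :
    g (fun i => (star (U : Matrix (Fin n) (Fin n) ℝ) * A * U) i i) ≤ g hA.eigenvalues := by
  set W : Matrix.unitaryGroup (Fin n) ℝ := hA.eigenvectorUnitary with hW
  set V : Matrix (Fin n) (Fin n) ℝ := star (U : Matrix (Fin n) (Fin n) ℝ) * W with hV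
  have hVmem : V ∈ Matrix.unitaryGroup (Fin n) ℝ :=
    mul_mem (Unitary.star_mem U.2) W.2
  have hV1 : V * star V = 1 := (Matrix.mem_unitaryGroup_iff.mp hVmem)
  have hV2 : star V * V = 1 := (Matrix.mem_unitaryGroup_iff'.mp hVmem)
  set C : Matrix (Fin n) (Fin n) ℝ := fun i j => (V i j) ^ 2 with hC
  have hCds : C ∈ doublyStochastic ℝ (Fin n) := by
    rw [mem_doublyStochastic_iff_sum]
    refine ⟨fun i j => sq_nonneg _, fun i => ?_, fun j => ?_⟩
    · have := congrArg (fun M => M i i) hV1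
      simp only [Matrix.mul_apply, Matrix.one_apply_eq, Matrix.conjTranspose_apply,
        star_trivial] at this
      simpa [hC, sq] using this
    · have := congrArg (fun M => M j j) hV2
      simp only [Matrix.mul_apply, Matrix.one_apply_eq, Matrix.conjTranspose_apply,
        star_trivial] at this
      simpa [hC, sq, mul_comm] using this
  have hdiag : (fun i => (star (U : Matrix (Fin n) (Fin n) ℝ) * A * U) i i)
      = C *ᵥ hA.eigenvalues := by
    have hspec : A = (W : Matrix (Fin n) (Fin n) ℝ) *
        diagonal (RCLike.ofReal ∘ hA.eigenvalues) * star (W : Matrix (Fin n) (Fin n) ℝ) :=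
      hA.spectral_theorem
    funext i
    have h1 : star (U : Matrix (Fin n) (Fin n) ℝ) * A * U
        = V * diagonal (hA.eigenvalues) * star V := by
      have h2 := congrArg (fun X => star (U : Matrix (Fin n) (Fin n) ℝ) * X
        * (U : Matrix (Fin n) (Fin n) ℝ)) hspec
      simp only [RCLike.ofReal_real_eq_id, Function.id_comp] at h2
      rw [h2, hV]
      simp only [Matrix.star_mul, star_star, Matrix.mul_assoc]
    rw [h1]
    simp [Matrix.mul_apply, Matrix.diagonal_apply, Matrix.conjTranspose_apply,
      mulVec, dotProduct, hC, mul_ite, ite_mul, mul_zero, zero_mul,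
      Finset.sum_ite_eq', sq, mul_comm, mul_assoc, mul_left_comm]
  obtain ⟨w, hw0, hw1, hwC⟩ := exists_eq_sum_perm_of_mem_doublyStochastic hCds
  have hCv : C *ᵥ hA.eigenvalues = ∑ σ : Equiv.Perm (Fin n),
      w σ • (hA.eigenvalues ∘ σ) := by
    rw [← hwC]
    funext i
    simp only [mulVec, dotProduct, Matrix.sum_apply, Finset.sum_apply, Matrix.smul_apply,
      smul_eq_mul, Finset.sum_mul, Pi.smul_apply, Function.comp_apply]
    rw [Finset.sum_comm]
    congr 1
    funext σ
    have := congrFun (permMatrix_mulVec σ hA.eigenvalues) i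
    simp only [mulVec, dotProduct, Function.comp_apply] at this
    simp only [mul_assoc, ← Finset.mul_sum, this]
  rw [hdiag, hCv]
  calc g (∑ σ : Equiv.Perm (Fin n), w σ • (hA.eigenvalues ∘ σ))
      ≤ ∑ σ : Equiv.Perm (Fin n), w σ * g (hA.eigenvalues ∘ σ) := by
        refine hconv.map_sum_le (fun σ _ => hw0 σ) (by simpa using hw1)
          (fun σ _ => Set.mem_univ _)
    _ = ∑ σ : Equiv.Perm (Fin n), w σ * g hA.eigenvalues := by
        simp_rw [hsymm]
    _ = g hA.eigenvalues := by rw [← Finset.sum_mul, hw1, one_mul]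

end aux

theorem stmt17 (n : ℕ) (g : (Fin n → ℝ) → ℝ)
    (hC2 : ContDiff ℝ 2 g)
    (hconv : ConvexOn ℝ Set.univ g)
    (hsymm : ∀ (σ : Equiv.Perm (Fin n)) (x : Fin n → ℝ), g (x ∘ σ) = g x)
    (f : Matrix (Fin n) (Fin n) ℝ → ℝ)
    (hf : ∀ (M : Matrix (Fin n) (Fin n) ℝ) (hM : M.IsHermitian),
      f M = g hM.eigenvalues) :
    ConvexOn ℝ {M : Matrix (Fin n) (Fin n) ℝ | M.IsHermitian} f := by
  constructor
  · intro A hA B hB a b ha hb hab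
    simp only [Set.mem_setOf_eq] at hA hB ⊢
    exact (isHermitian_smul_real hA a).add (isHermitian_smul_real hB b)
  · intro A hA B hB a b ha hb hab
    simp only [Set.mem_setOf_eq] at hA hB
    have hM : (a • A + b • B).IsHermitian := (isHermitian_smul_real hA a).add (isHermitian_smul_real hB b)
    set U : Matrix.unitaryGroup (Fin n) ℝ := hM.eigenvectorUnitary with hU
    have key : hM.eigenvalues = fun i =>
        (star (U : Matrix (Fin n) (Fin n) ℝ) * (a • A + b • B) * U) i i := by
      have h : star (hM.eigenvectorUnitary : Matrix (Fin n) (Fin n) ℝ) * (a • A + b • B) *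
          (hM.eigenvectorUnitary : Matrix (Fin n) (Fin n) ℝ) =
          diagonal (RCLike.ofReal ∘ hM.eigenvalues) :=
        hM.conjStarAlgAut_star_eigenvectorUnitary
      simp only [RCLike.ofReal_real_eq_id, Function.id_comp] at h
      funext i
      rw [hU, h]
      simp
    have hdA := diag_le_eigenvalues g hconv hsymm A hA U
    have hdB := diag_le_eigenvalues g hconv hsymm B hB U
    have hlin : (fun i => (star (U : Matrix (Fin n) (Fin n) ℝ) * (a • A + b • B) * U) i i)
        = a • (fun i => (star (U : Matrix (Fin n) (Fin n) ℝ) * A * U) i i)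
          + b • (fun i => (star (U : Matrix (Fin n) (Fin n) ℝ) * B * U) i i) := by
      funext i
      simp [Matrix.mul_add, Matrix.add_mul, Matrix.mul_smul, Matrix.smul_mul]
    rw [hf _ hM, hf _ hA, hf _ hB, key, hlin]
    calc g (a • _ + b • _) ≤ a * g _ + b * g _ :=
          hconv.2 (Set.mem_univ _) (Set.mem_univ _) ha hb hab
      _ ≤ a * g hA.eigenvalues + b * g hB.eigenvalues := by
          gcongr <;> assumption
end

section
/- (Davis's theorem, converse direction) If f is a convex, orthogonally invariant function on n×n real symmetric matrices, then the induced function g(λ) = f(diag(λ)) on ℝⁿ is convex and symmetric. Conversely, if g is convex and symmetric then the orthogonally invariant extension f with f(M) = g(eigenvalues of M) is convex. Hence orthogonally invariant convex functions on symmetric matrices correspond exactly to symmetric convex functions on ℝⁿ. -/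
open Matrix

private lemma permMV {n : ℕ} (σ : Equiv.Perm (Fin n)) (lam : Fin n → ℝ) :
    (σ.permMatrix ℝ) *ᵥ lam = lam ∘ σ := by
  funext i
  simp [Equiv.Perm.permMatrix, PEquiv.toMatrix, mulVec, dotProduct, Equiv.toPEquiv]

private lemma keyLem {n : ℕ} (g : (Fin n → ℝ) → ℝ) (hg : ConvexOn ℝ Set.univ g)
    (hsym : ∀ (σ : Equiv.Perm (Fin n)) (x : Fin n → ℝ), g (x ∘ σ) = g x)
    (W : Matrix (Fin n) (Fin n) ℝ) (hW : Wᵀ * W = 1) (lam : Fin n → ℝ) :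
    g (fun i => (Wᵀ * Matrix.diagonal lam * W) i i) ≤ g lam := by
  set S : Matrix (Fin n) (Fin n) ℝ := Matrix.of fun i j => (W j i)^2 with hSdef
  have hWW : W * Wᵀ = 1 := mul_eq_one_comm.mp hW
  have hS : S ∈ doublyStochastic ℝ (Fin n) := by
    rw [mem_doublyStochastic_iff_sum]
    refine ⟨fun i j => sq_nonneg _, fun i => ?_, fun j => ?_⟩
    · have := congrFun (congrFun hW i) i
      simpa [hSdef, Matrix.mul_apply, pow_two, Matrix.one_apply] using this
    · have := congrFun (congrFun hWW j) j
      simpa [hSdef, Matrix.mul_apply, pow_two, Matrix.one_apply] using this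
  have hdiag : (fun i => (Wᵀ * Matrix.diagonal lam * W) i i) = S *ᵥ lam := by
    funext i
    simp only [Matrix.mul_apply, Matrix.diagonal_apply, mulVec, dotProduct]
    refine Finset.sum_congr rfl fun j _ => ?_
    simp [hSdef, Finset.sum_ite_eq', pow_two, mul_ite, ite_mul]
    ring
  obtain ⟨w, hw0, hw1, hwS⟩ := exists_eq_sum_perm_of_mem_doublyStochastic hS
  have hSv : S *ᵥ lam = ∑ σ : Equiv.Perm (Fin n), w σ • (lam ∘ σ) := by
    rw [← hwS]
    funext i
    simp only [mulVec, dotProduct, Finset.sum_apply, Matrix.sum_apply, Matrix.smul_apply,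
      smul_eq_mul, Finset.sum_mul, Pi.smul_apply, Function.comp_apply]
    rw [Finset.sum_comm]
    refine Finset.sum_congr rfl fun σ _ => ?_
    have := congrFun (permMV σ lam) i
    simp only [mulVec, dotProduct, Function.comp_apply] at this
    simp only [mul_assoc, ← Finset.mul_sum]
    rw [this]
  calc g (fun i => (Wᵀ * Matrix.diagonal lam * W) i i)
      = g (∑ σ : Equiv.Perm (Fin n), w σ • (lam ∘ σ)) := by rw [hdiag, hSv]
    _ ≤ ∑ σ : Equiv.Perm (Fin n), w σ * g (lam ∘ σ) :=
        hg.map_sum_le (fun i _ => hw0 i) hw1 (fun i _ => Set.mem_univ _)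
    _ = g lam := by simp [hsym, ← Finset.sum_mul, hw1]

private lemma eigTrans {n : ℕ} (M : Matrix (Fin n) (Fin n) ℝ) (hM : M.IsHermitian) :
    (hM.eigenvectorUnitary : Matrix (Fin n) (Fin n) ℝ)ᵀ *
      (hM.eigenvectorUnitary : Matrix (Fin n) (Fin n) ℝ) = 1 := by
  have := hM.eigenvectorUnitary.2
  rw [Matrix.mem_unitaryGroup_iff'] at this
  simpa [Matrix.star_eq_conjTranspose, Matrix.conjTranspose_eq_transpose_of_trivial] using this

private lemma specThm {n : ℕ} (M : Matrix (Fin n) (Fin n) ℝ) (hM : M.IsHermitian) :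
    M = (hM.eigenvectorUnitary : Matrix (Fin n) (Fin n) ℝ) * diagonal hM.eigenvalues
      * (hM.eigenvectorUnitary : Matrix (Fin n) (Fin n) ℝ)ᵀ := by
  have := hM.spectral_theorem
  simpa [Matrix.star_eq_conjTranspose, Matrix.conjTranspose_eq_transpose_of_trivial] using this

/-- diagonal entries of conjugated matrix dominate via g -/
private lemma keyLem2 {n : ℕ} (g : (Fin n → ℝ) → ℝ) (hg : ConvexOn ℝ Set.univ g)
    (hsym : ∀ (σ : Equiv.Perm (Fin n)) (x : Fin n → ℝ), g (x ∘ σ) = g x)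
    (U : Matrix (Fin n) (Fin n) ℝ) (hU : Uᵀ * U = 1)
    (M : Matrix (Fin n) (Fin n) ℝ) (hM : M.IsHermitian) :
    g (fun i => (Uᵀ * M * U) i i) ≤ g hM.eigenvalues := by
  set V : Matrix (Fin n) (Fin n) ℝ := (hM.eigenvectorUnitary : Matrix (Fin n) (Fin n) ℝ) with hV
  have hVo : Vᵀ * V = 1 := eigTrans M hM
  have hVo' : V * Vᵀ = 1 := mul_eq_one_comm.mp hVo
  set W : Matrix (Fin n) (Fin n) ℝ := Vᵀ * U with hWdef
  have hWo : Wᵀ * W = 1 := by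
    rw [hWdef, Matrix.transpose_mul, Matrix.transpose_transpose, Matrix.mul_assoc,
      ← Matrix.mul_assoc V, hVo', Matrix.one_mul, hU]
  have hconj : Uᵀ * M * U = Wᵀ * diagonal hM.eigenvalues * W := by
    rw [hWdef, Matrix.transpose_mul, Matrix.transpose_transpose]
    conv_lhs => rw [specThm M hM]
    simp only [Matrix.mul_assoc]
    rfl
  rw [hconj]
  exact keyLem g hg hsym W hWo _

private lemma hermSmul {n : ℕ} (a : ℝ) {M : Matrix (Fin n) (Fin n) ℝ}
    (h : M.IsHermitian) : (a • M).IsHermitian := by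
  rw [Matrix.IsHermitian] at *
  rw [Matrix.conjTranspose_smul, h, star_trivial]

private lemma isHermitian_real_diagonal {n : ℕ} (l : Fin n → ℝ) :
    (Matrix.diagonal l).IsHermitian := by
  rw [Matrix.IsHermitian, Matrix.conjTranspose_eq_transpose_of_trivial, Matrix.diagonal_transpose]

theorem stmt18 (n : ℕ) :
    (∀ f : Matrix (Fin n) (Fin n) ℝ → ℝ,
      (∀ U : Matrix (Fin n) (Fin n) ℝ, Uᵀ * U = 1 →
        ∀ M : Matrix (Fin n) (Fin n) ℝ, M.IsHermitian → f (Uᵀ * M * U) = f M) →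
      ConvexOn ℝ {M : Matrix (Fin n) (Fin n) ℝ | M.IsHermitian} f →
      (ConvexOn ℝ Set.univ (fun l : Fin n → ℝ => f (Matrix.diagonal l)) ∧
        ∀ (σ : Equiv.Perm (Fin n)) (l : Fin n → ℝ),
          f (Matrix.diagonal (l ∘ σ)) = f (Matrix.diagonal l))) ∧
    (∀ g : (Fin n → ℝ) → ℝ,
      ConvexOn ℝ Set.univ g →
      (∀ (σ : Equiv.Perm (Fin n)) (x : Fin n → ℝ), g (x ∘ σ) = g x) →
      ∀ f : Matrix (Fin n) (Fin n) ℝ → ℝ,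
        (∀ (M : Matrix (Fin n) (Fin n) ℝ) (hM : M.IsHermitian),
          f M = g hM.eigenvalues) →
        ConvexOn ℝ {M : Matrix (Fin n) (Fin n) ℝ | M.IsHermitian} f) := by
  constructor
  · intro f hinv hconv
    constructor
    · refine ⟨convex_univ, ?_⟩
      intro x _ y _ a b ha hb hab
      have h1 : Matrix.diagonal (a • x + b • y)
          = a • Matrix.diagonal x + b • Matrix.diagonal y := by
        ext i j
        by_cases h : i = j <;> simp [Matrix.diagonal_apply, h]
      simp only []
      rw [h1]
      exact hconv.2 (isHermitian_real_diagonal x) (isHermitian_real_diagonal y) ha hb hab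
    · intro σ l
      set P : Matrix (Fin n) (Fin n) ℝ := σ.permMatrix ℝ with hP
      have hPt : Pᵀ = σ.symm.toPEquiv.toMatrix := by
        rw [hP, Equiv.Perm.permMatrix, ← PEquiv.toMatrix_symm, Equiv.toPEquiv_symm]
      have hPo : P * Pᵀ = 1 := by
        rw [hPt, hP, Equiv.Perm.permMatrix, PEquiv.toMatrix_toPEquiv_mul]
        ext i j
        simp [PEquiv.toMatrix, Equiv.toPEquiv, Matrix.one_apply, Equiv.symm_apply_eq]
      have hdiageq : Pᵀᵀ * Matrix.diagonal l * Pᵀ = Matrix.diagonal (l ∘ σ) := by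
        rw [Matrix.transpose_transpose, hPt, hP, Equiv.Perm.permMatrix,
          PEquiv.toMatrix_toPEquiv_mul, PEquiv.mul_toMatrix_toPEquiv]
        ext i j
        simp only [Matrix.submatrix_apply, id_eq, Equiv.symm_symm, Matrix.diagonal_apply,
          Function.comp_apply]
        by_cases h : i = j
        · simp [h]
        · rw [if_neg h, if_neg (fun hh => h (σ.injective hh))]
      have horth : (Pᵀ)ᵀ * Pᵀ = 1 := by rw [Matrix.transpose_transpose]; exact hPo
      have := hinv Pᵀ horth (Matrix.diagonal l) (isHermitian_real_diagonal l)
      rw [hdiageq] at this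
      exact this
  · intro g hg hsym f hf
    have hset : Convex ℝ {M : Matrix (Fin n) (Fin n) ℝ | M.IsHermitian} := by
      intro M hM N hN a b ha hb hab
      exact Matrix.IsHermitian.add (hermSmul a hM) (hermSmul b hN)
    refine ⟨hset, ?_⟩
    intro M hM N hN a b ha hb hab
    have hMh : M.IsHermitian := hM
    have hNh : N.IsHermitian := hN
    have hC : (a • M + b • N).IsHermitian :=
      Matrix.IsHermitian.add (hermSmul a hMh) (hermSmul b hNh)
    set V : Matrix (Fin n) (Fin n) ℝ := (hC.eigenvectorUnitary : Matrix (Fin n) (Fin n) ℝ)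
      with hV
    have hVo : Vᵀ * V = 1 := eigTrans _ hC
    have hVo' : V * Vᵀ = 1 := mul_eq_one_comm.mp hVo
    have hdiagC : Vᵀ * (a • M + b • N) * V = Matrix.diagonal hC.eigenvalues := by
      conv_lhs => rw [show a • M + b • N =
        V * Matrix.diagonal hC.eigenvalues * Vᵀ from specThm _ hC]
      simp only [Matrix.mul_assoc]
      rw [hVo, Matrix.mul_one, ← Matrix.mul_assoc, hVo, Matrix.one_mul]
    have heig : hC.eigenvalues = fun i => (Vᵀ * (a • M + b • N) * V) i i := by
      funext i
      rw [hdiagC]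
      simp
    have hsplit : (fun i => (Vᵀ * (a • M + b • N) * V) i i)
        = a • (fun i => (Vᵀ * M * V) i i) + b • (fun i => (Vᵀ * N * V) i i) := by
      funext i
      simp only [Pi.add_apply, Pi.smul_apply, smul_eq_mul]
      rw [Matrix.mul_add, Matrix.add_mul]
      simp [Matrix.mul_smul, Matrix.smul_mul]
    calc f (a • M + b • N) = g hC.eigenvalues := hf _ hC
      _ = g (a • (fun i => (Vᵀ * M * V) i i) + b • (fun i => (Vᵀ * N * V) i i)) := by
          rw [heig, hsplit]
      _ ≤ a * g (fun i => (Vᵀ * M * V) i i) + b * g (fun i => (Vᵀ * N * V) i i) :=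
          hg.2 (Set.mem_univ _) (Set.mem_univ _) ha hb hab
      _ ≤ a * g hMh.eigenvalues + b * g hNh.eigenvalues := by
          gcongr
          · exact keyLem2 g hg hsym V hVo M hMh
          · exact keyLem2 g hg hsym V hVo N hNh
      _ = a * f M + b * f N := by rw [hf M hMh, hf N hNh]
end
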